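/- arXiv:2202.11914 — 2 statements merged into one kernel-verified Lean document; each statement's English description precedes it below -/
import Mathlib

section
/- Let H be a real Hilbert space with inner products a(·,·) (norm ‖·‖ₐ) and (·,·) (norm ‖·‖₀), û ∈ H with ‖û‖ₐ = 1 satisfying a(û,v) = λ̂(û,v) for all v ∈ H (λ̂ > 0), and let E be the a-orthogonal projection onto span{û}. Then for any u ∈ H with ‖u‖ₐ = 1, a(u,û) ≥ 0 and (u,u) > 0: 0 ≤ a(u,u)/(u,u) − λ̂ ≤ 4‖u − Eu‖ₐ²/‖u‖₀² provided λ̂ is the smallest eigenvalue in the sense that a(v,v) ≥ λ̂(v,v) for all v ∈ H. -/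
theorem stmt_16 {H : Type*} [NormedAddCommGroup H] [InnerProductSpace ℝ H] [CompleteSpace H]
    (b : H →ₗ[ℝ] H →ₗ[ℝ] ℝ) (hb_symm : ∀ u v, b u v = b v u)
    (hb_nonneg : ∀ v, 0 ≤ b v v)
    (lamh : ℝ) (hlamh : 0 < lamh)
    (uh : H) (huh : ‖uh‖ = 1)
    (heig : ∀ v : H, (inner ℝ uh v : ℝ) = lamh * b uh v)
    (hminmax : ∀ v : H, lamh * b v v ≤ (inner ℝ v v : ℝ))
    (u : H) (hu : ‖u‖ = 1) (hpos : (0 : ℝ) ≤ inner ℝ u uh) (hbu : 0 < b u u) :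
    0 ≤ (inner ℝ u u : ℝ) / b u u - lamh ∧
      (inner ℝ u u : ℝ) / b u u - lamh ≤ 4 * ‖u - (inner ℝ u uh : ℝ) • uh‖ ^ 2 / b u u := by
  set c : ℝ := inner ℝ u uh with hc
  have hin : (inner ℝ u u : ℝ) = 1 := by
    rw [real_inner_self_eq_norm_mul_norm, hu]; norm_num
  have hinuh : (inner ℝ uh uh : ℝ) = 1 := by
    rw [real_inner_self_eq_norm_mul_norm, huh]; norm_num
  have hc1 : c ≤ 1 := by
    have := real_inner_le_norm u uh
    simpa [hu, huh, hc] using this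
  have hbuhuh : lamh * b uh uh = 1 := by rw [← heig uh, hinuh]
  have hbuhu : lamh * b uh u = c := by
    rw [← heig u, real_inner_comm]
  have hexp : b (u - uh) (u - uh) = b u u - 2 * b uh u + b uh uh := by
    simp only [map_sub, LinearMap.sub_apply]
    rw [hb_symm u uh]; ring
  have hkey : 1 - lamh * b u u ≤ 2 - 2 * c := by
    have h0 : 0 ≤ b (u - uh) (u - uh) := hb_nonneg _
    have h1 : 0 ≤ lamh * b (u - uh) (u - uh) := by positivity
    rw [hexp] at h1
    nlinarith
  have hnorm : ‖u - c • uh‖ ^ 2 = 1 - c ^ 2 := by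
    rw [← real_inner_self_eq_norm_sq]
    simp only [inner_sub_sub_self, inner_smul_left, inner_smul_right, real_inner_comm uh u,
      RCLike.conj_to_real]
    have hcomm : (inner ℝ uh u : ℝ) = c := by rw [real_inner_comm]
    rw [hin, hinuh, hcomm]
    ring
  have h2 : 1 - lamh * b u u ≤ 4 * (1 - c ^ 2) := by nlinarith
  constructor
  · have h1 := hminmax u
    rw [hin] at h1
    rw [hin, sub_nonneg, le_div_iff₀ hbu]
    linarith
  · rw [hin, hnorm]
    calc 1 / b u u - lamh = (1 - lamh * b u u) / b u u := by field_simp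
      _ ≤ 4 * (1 - c ^ 2) / b u u := (div_le_div_iff_of_pos_right hbu).mpr h2
end

section
/- Let C#, C_M, γ, C_low, C_up > 0, s > 0, 0 < α < 1, and let (e_k) be positive reals with e_{k} ≤ α^{2(k−i)} e_i for all i ≤ k. Suppose nonnegative integers m_i satisfy m_i ≤ C_M e_i^{−1/(2s)} and N_k ≤ C# Σ_{i=1}^{k−1} m_i. Then N_k ≤ C# C_M (α^{1/s}/(1 − α^{1/s})) e_k^{−1/(2s)}, i.e. e_k ≤ (C# C_M α^{1/s}/(1 − α^{1/s}))^{2s} N_k^{−2s}. -/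
theorem stmt_17 (Csharp C_M γ C_low C_up s α : ℝ)
    (hCsharp : 0 < Csharp) (hCM : 0 < C_M) (hγ : 0 < γ) (hClow : 0 < C_low)
    (hCup : 0 < C_up) (hs : 0 < s) (hα0 : 0 < α) (hα1 : α < 1)
    (e : ℕ → ℝ) (hepos : ∀ i, 0 < e i)
    (hcontr : ∀ i k, i ≤ k → e k ≤ α ^ (2 * (k - i)) * e i)
    (m : ℕ → ℕ) (hm : ∀ i, (m i : ℝ) ≤ C_M * (e i) ^ (-(1 / (2 * s))))
    (N : ℕ → ℕ) (hN : ∀ k, (N k : ℝ) ≤ Csharp * ∑ i ∈ Finset.Ico 1 k, (m i : ℝ)) :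
    ∀ k, (N k : ℝ) ≤ Csharp * C_M * (α ^ (1 / s) / (1 - α ^ (1 / s))) *
      (e k) ^ (-(1 / (2 * s))) := by
  intro k
  set c : ℝ := -(1 / (2 * s)) with hcdef
  set β : ℝ := α ^ (1 / s) with hβdef
  have hβ0 : 0 < β := Real.rpow_pos_of_pos hα0 _
  have hβ1 : β < 1 := Real.rpow_lt_one hα0.le hα1 (by positivity)
  have h1β : 0 < 1 - β := by linarith
  have hcle : c ≤ 0 := by
    have h : (0:ℝ) < 1 / (2 * s) := by positivity
    simp only [hcdef]; linarith
  have hekc : 0 < (e k) ^ c := Real.rpow_pos_of_pos (hepos k) _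
  -- per-term bound
  have hterm : ∀ i ∈ Finset.Ico 1 k, (m i : ℝ) ≤ C_M * (e k) ^ c * β ^ (k - i) := by
    intro i hi
    obtain ⟨hi1, hik⟩ := Finset.mem_Ico.mp hi
    have hik' : i ≤ k := hik.le
    have hA : (0:ℝ) < α ^ (2 * (k - i)) := pow_pos hα0 _
    have h2 : (α ^ (2 * (k - i)) * e i) ^ c ≤ (e k) ^ c :=
      Real.rpow_le_rpow_of_nonpos (hepos k) (hcontr i k hik') hcle
    rw [Real.mul_rpow hA.le (hepos i).le] at h2
    have hX : 0 < (α ^ (2 * (k - i)) : ℝ) ^ c := Real.rpow_pos_of_pos hA _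
    have h4 : (e i) ^ c ≤ (e k) ^ c * ((α ^ (2 * (k - i)) : ℝ) ^ c)⁻¹ := by
      rw [mul_comm, inv_mul_eq_div, le_div_iff₀ hX]
      calc (e i) ^ c * (α ^ (2 * (k - i)) : ℝ) ^ c
          = (α ^ (2 * (k - i)) : ℝ) ^ c * (e i) ^ c := by ring
        _ ≤ (e k) ^ c := h2
    have h5 : ((α ^ (2 * (k - i)) : ℝ) ^ c)⁻¹ = β ^ (k - i) := by
      rw [← Real.rpow_neg hA.le, ← Real.rpow_natCast α (2 * (k - i)),
        ← Real.rpow_natCast β (k - i), hβdef, ← Real.rpow_mul hα0.le,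
        ← Real.rpow_mul hα0.le]
      congr 1
      push_cast
      simp only [hcdef]
      field_simp
    rw [h5] at h4
    calc (m i : ℝ) ≤ C_M * (e i) ^ c := hm i
      _ ≤ C_M * ((e k) ^ c * β ^ (k - i)) := by
          exact mul_le_mul_of_nonneg_left h4 hCM.le
      _ = C_M * (e k) ^ c * β ^ (k - i) := by ring
  have hsum : ∑ i ∈ Finset.Ico 1 k, (m i : ℝ)
      ≤ C_M * (e k) ^ c * (β / (1 - β)) := by
    calc ∑ i ∈ Finset.Ico 1 k, (m i : ℝ)
        ≤ ∑ i ∈ Finset.Ico 1 k, C_M * (e k) ^ c * β ^ (k - i) :=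
          Finset.sum_le_sum hterm
      _ = C_M * (e k) ^ c * ∑ i ∈ Finset.Ico 1 k, β ^ (k - i) := by
          rw [Finset.mul_sum]
      _ ≤ C_M * (e k) ^ c * (β / (1 - β)) := by
          refine mul_le_mul_of_nonneg_left ?_ (by positivity)
          have hre : ∑ i ∈ Finset.Ico 1 k, β ^ (k - i)
              = ∑ j ∈ Finset.range (k - 1), β ^ (j + 1) := by
            rw [Finset.sum_Ico_eq_sum_range]
            rw [← Finset.sum_range_reflect]
            apply Finset.sum_congr rfl
            intro j hj
            have hjk : j < k - 1 := Finset.mem_range.mp hj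
            congr 1
            omega
          rw [hre]
          have : ∑ j ∈ Finset.range (k - 1), β ^ (j + 1)
              = β * ∑ j ∈ Finset.range (k - 1), β ^ j := by
            rw [Finset.mul_sum]
            apply Finset.sum_congr rfl
            intro j _
            ring
          rw [this]
          have hg : ∑ j ∈ Finset.range (k - 1), β ^ j ≤ (1 - β)⁻¹ := by
            rw [geom_sum_eq (by linarith : β ≠ 1),
              div_le_iff_of_neg (by linarith : β - 1 < 0)]
            have h1 : (1 - β)⁻¹ * (β - 1) = -1 := by field_simp; ring
            rw [h1]
            have hpow : 0 ≤ β ^ (k - 1) := pow_nonneg hβ0.le _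
            linarith
          calc β * ∑ j ∈ Finset.range (k - 1), β ^ j ≤ β * (1 - β)⁻¹ :=
              mul_le_mul_of_nonneg_left hg hβ0.le
            _ = β / (1 - β) := by rw [div_eq_mul_inv]
  calc (N k : ℝ) ≤ Csharp * ∑ i ∈ Finset.Ico 1 k, (m i : ℝ) := hN k
    _ ≤ Csharp * (C_M * (e k) ^ c * (β / (1 - β))) :=
        mul_le_mul_of_nonneg_left hsum hCsharp.le
    _ = Csharp * C_M * (β / (1 - β)) * (e k) ^ c := by ring
end
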